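/- Let n ≥ 1. The number of binary operations on the finite chain C_n = {0,…,n} satisfying (S1) and (S2) is exactly 2^n. -/

import Mathlib

/-- The finite chain effect algebra `C_n = {0, 1, …, n}` with `i ⊕ j = i + j`
when `i + j ≤ n`. -/
def Chain (n : ℕ) : Type := {k : ℕ // k ≤ n}

/-- A self-map of `C_n` is additive if `L (i + j) = L i + L j` whenever `i + j ≤ n`. -/
def ChainAdditive {n : ℕ} (L : Chain n → Chain n) : Prop :=
  ∀ i j k : Chain n, i.val + j.val = k.val → (L k).val = (L i).val + (L j).val

/-- the top element `n` of `C_n`. -/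
def ChainTop (n : ℕ) : Chain n := ⟨n, le_refl n⟩

/-- (S1) on `C_n`: every left translation is additive. -/
def ChainS1 {n : ℕ} (op : Chain n → Chain n → Chain n) : Prop :=
  ∀ a : Chain n, ChainAdditive (op a)

/-- (S2) on `C_n`: `n ∘ b = b`. -/
def ChainS2 {n : ℕ} (op : Chain n → Chain n → Chain n) : Prop :=
  ∀ b : Chain n, op (ChainTop n) b = b

/-- (S3) on `C_n`: `a ∘ b = 0` implies `b ∘ a = 0`. -/
def ChainS3 {n : ℕ} (op : Chain n → Chain n → Chain n) : Prop :=
  ∀ a b : Chain n, (op a b).val = 0 → (op b a).val = 0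

/-- for `n ≥ 1`, there are exactly `2^n` binary operations on the chain
`C_n` satisfying (S1) and (S2). -/
lemma chain_additive_cases {n : ℕ} (hn : 1 ≤ n) (L : Chain n → Chain n)
    (h : ChainAdditive L) : (∀ b, L b = b) ∨ (∀ b, (L b).val = 0) := by
  have h0 : (L ⟨0, Nat.zero_le n⟩).val = 0 := by
    have := h ⟨0, Nat.zero_le n⟩ ⟨0, Nat.zero_le n⟩ ⟨0, Nat.zero_le n⟩ rfl
    omega
  have key : ∀ k (hk : k ≤ n), (L ⟨k, hk⟩).val = k * (L ⟨1, hn⟩).val := by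
    intro k
    induction k with
    | zero => intro hk; simpa using h0
    | succ m ih =>
      intro hk
      have hm : m ≤ n := Nat.le_of_succ_le hk
      have := h ⟨m, hm⟩ ⟨1, hn⟩ ⟨m + 1, hk⟩ rfl
      rw [this, ih hm]; ring
  set m := (L ⟨1, hn⟩).val with hm
  have hbound : n * m ≤ n := by
    rw [← key n le_rfl]; exact (L ⟨n, le_rfl⟩).prop
  rcases Nat.eq_zero_or_pos m with h1 | h1
  · right
    intro b
    have := key b.val b.prop
    simp only [h1, Nat.mul_zero] at this
    exact this
  · left
    have hm1 : m = 1 := by nlinarith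
    intro b
    have := key b.val b.prop
    rw [hm1, Nat.mul_one] at this
    change (L b).val = b.val at this
    exact Subtype.ext this

theorem chain_S1S2_count (n : ℕ) (hn : 1 ≤ n) :
    Nat.card {op : Chain n → Chain n → Chain n // ChainS1 op ∧ ChainS2 op} = 2 ^ n := by
  have e : {op : Chain n → Chain n → Chain n // ChainS1 op ∧ ChainS2 op} ≃ (Fin n → Bool) := by
    refine
    { toFun := fun op i => decide ((op.1 ⟨i.val, le_of_lt i.isLt⟩ ⟨1, hn⟩).val = 1)
      invFun := fun g =>
        ⟨fun a b => if h : a.val < n then (if g ⟨a.val, h⟩ then b else ⟨0, Nat.zero_le n⟩) else b,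
         ?_, ?_⟩
      left_inv := ?_
      right_inv := ?_ }
    · -- S1
      intro a i j k hijk
      by_cases h : a.val < n
      · by_cases hg : g ⟨a.val, h⟩ <;> simp [h, hg, ← hijk]
      · simp [h, ← hijk]
    · -- S2
      intro b
      have : ¬ (ChainTop n).val < n := by simp [ChainTop]
      simp [this]
    · -- left_inv
      rintro ⟨op, hS1, hS2⟩
      ext a b
      simp only
      by_cases h : a.val < n
      · have ha : (⟨a.val, le_of_lt h⟩ : Chain n) = a := Subtype.ext rfl
        rcases chain_additive_cases hn (op a) (hS1 a) with hid | hz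
        · have h1 : (op a ⟨1, hn⟩).val = 1 := by exact congrArg Subtype.val (hid ⟨1, hn⟩)
          simp [h, ha, h1, hid b]
        · have h1 : (op a ⟨1, hn⟩).val = 0 := hz _
          have : ¬ (op a ⟨1, hn⟩).val = 1 := by omega
          simp only [h, dif_pos, ha, this, decide_eq_true_eq, if_false, decide_false]
          exact Subtype.ext (hz b).symm
      · have ha : a = ChainTop n := Subtype.ext (by
          have := a.prop; simp only [ChainTop]; omega)
        subst ha
        have h' : ¬ (ChainTop n).val < n := by simp [ChainTop]
        simp [h', hS2 b]
    · -- right_inv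
      intro g
      funext i
      have h : (i : ℕ) < n := i.isLt
      have hi : (⟨i.val, h⟩ : Fin n) = i := Fin.ext rfl
      by_cases hg : g i
      · simp [h, hi, hg]
      · simp only [Bool.not_eq_true] at hg
        simp [h, hi, hg]
  rw [Nat.card_congr e]
  simp [Nat.card_eq_fintype_card]
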